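/- Let ℓ ≥ 0 be an integer and P_ℓ the Legendre polynomial of degree ℓ. Then for all real x: P_ℓ(x) = ℓ!·Σ_{q=0}^{⌊ℓ/2⌋} ((x²-1)^q · x^{ℓ-2q}) / (4^q·(ℓ-2q)!·(q!)²). -/

import Mathlib

open Polynomial Finset

/-- Coefficient in the formula for the `m`-th derivative of `(X²-1)^ℓ`. -/
private def Tc (ℓ m q : ℕ) : ℕ :=
  m.factorial * ℓ.choose (m - q) * (m - q).choose q * 2 ^ (m - 2 * q)

/-- Term in the formula for the `m`-th derivative of `(X²-1)^ℓ`. -/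
private noncomputable def Tp (ℓ m q : ℕ) : ℝ[X] :=
  C (Tc ℓ m q : ℝ) * ((X : ℝ[X]) ^ 2 - 1) ^ (ℓ - m + q) * X ^ (m - 2 * q)

private noncomputable def Ap (ℓ m q : ℕ) : ℝ[X] :=
  C ((Tc ℓ m q * (2 * (ℓ - m + q)) : ℕ) : ℝ) * ((X : ℝ[X]) ^ 2 - 1) ^ (ℓ - (m + 1) + q) *
    X ^ (m - 2 * q + 1)

private noncomputable def Bp (ℓ m q : ℕ) : ℝ[X] :=
  C (Tc ℓ m q : ℝ) * ((X : ℝ[X]) ^ 2 - 1) ^ (ℓ - m + q) *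
    (C ((m - 2 * q : ℕ) : ℝ) * X ^ (m - 2 * q - 1))

private lemma derivTp (ℓ m q : ℕ) (h : m < ℓ) :
    derivative (Tp ℓ m q) = Ap ℓ m q + Bp ℓ m q := by
  have he : ℓ - m + q = (ℓ - (m + 1) + q) + 1 := by omega
  simp only [Tp, Ap, Bp, derivative_mul, derivative_C, derivative_pow, derivative_sub,
    derivative_one, derivative_X_pow]
  rw [he]
  simp only [derivative_X, mul_one, map_natCast, map_ofNat]
  push_cast
  ring

private lemma step0 (ℓ m : ℕ) (hm : m + 1 ≤ ℓ) : Tp ℓ (m + 1) 0 = Ap ℓ m 0 := by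
  have hc : Tc ℓ (m + 1) 0 = Tc ℓ m 0 * (2 * (ℓ - m + 0)) := by
    simp only [Tc, Nat.sub_zero, Nat.choose_zero_right, Nat.mul_one, Nat.add_zero]
    have h1 : ℓ.choose (m + 1) * (m + 1) = ℓ.choose m * (ℓ - m) := Nat.choose_succ_right_eq ℓ m
    have h2 : (m + 1).factorial = (m + 1) * m.factorial := Nat.factorial_succ m
    have h3 : (2:ℕ) ^ (m + 1 - 2 * 0) = 2 * 2 ^ (m - 2 * 0) := by
      simp [pow_succ]; ring
    calc (m + 1).factorial * ℓ.choose (m + 1) * 2 ^ (m + 1 - 2 * 0)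
        = (ℓ.choose (m + 1) * (m + 1)) * m.factorial * 2 ^ (m + 1 - 2 * 0) := by rw [h2]; ring
      _ = (ℓ.choose m * (ℓ - m)) * m.factorial * (2 * 2 ^ (m - 2 * 0)) := by rw [h1, h3]
      _ = m.factorial * ℓ.choose m * 2 ^ (m - 2 * 0) * (2 * (ℓ - m)) := by ring
  rw [Tp, Ap, hc]
  norm_num

private lemma step_eq (ℓ m q : ℕ) (hq : q ≤ m) (hm : m + 1 ≤ ℓ) :
    Tp ℓ (m + 1) (q + 1) = Ap ℓ m (q + 1) + Bp ℓ m q := by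
  rcases lt_trichotomy m (2 * q + 1) with h | h | h
  · -- m ≤ 2q : everything vanishes
    have h1 : Tc ℓ (m + 1) (q + 1) = 0 := by
      simp [Tc]
      right
      exact Nat.choose_eq_zero_of_lt (by omega)
    have h2 : Tc ℓ m (q + 1) = 0 := by
      simp [Tc]
      right
      exact Nat.choose_eq_zero_of_lt (by omega)
    have h3 : m - 2 * q = 0 := by omega
    simp [Tp, Ap, Bp, h1, h2, h3]
  · -- m = 2q+1
    subst h
    have hA : Tc ℓ (2 * q + 1) (q + 1) = 0 := by
      simp [Tc]
      right
      exact Nat.choose_eq_zero_of_lt (by omega)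
    have e1 : ℓ - (2 * q + 1 + 1) + (q + 1) = ℓ - (2 * q + 1) + q := by omega
    have e2 : (2 * q + 1 + 1) - 2 * (q + 1) = 0 := by omega
    have e3 : 2 * q + 1 - 2 * q - 1 = 0 := by omega
    have hc : Tc ℓ (2 * q + 1 + 1) (q + 1) = Tc ℓ (2 * q + 1) q * (2 * q + 1 - 2 * q) := by
      have s1 : (2 * q + 1 + 1) - (q + 1) = q + 1 := by omega
      have s2 : (2 * q + 1) - q = q + 1 := by omega
      have s3 : (2 * q + 1 + 1) - 2 * (q + 1) = 0 := by omega
      have s4 : 2 * q + 1 - 2 * q = 1 := by omega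
      simp only [Tc, s1, s2, s3, s4]
      have f1 : (2 * q + 1 + 1).factorial = (2 * q + 2) * (2 * q + 1).factorial := by
        rw [show 2 * q + 1 + 1 = (2 * q + 1) + 1 from rfl, Nat.factorial_succ]
      have f2 : (q + 1).choose q = q + 1 := Nat.choose_succ_self_right q
      rw [f1, Nat.choose_self, f2]
      ring
    rw [Tp, Ap, Bp, hA, hc, e1, e2, e3]
    push_cast
    simp only [C_0, map_mul, map_natCast, zero_mul, mul_zero]
    ring
  · -- main case : 2q+2 ≤ m
    obtain ⟨t, rfl⟩ : ∃ t, m = 2 * q + 2 + t := ⟨m - (2 * q + 2), by omega⟩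
    obtain ⟨s, rfl⟩ : ∃ s, ℓ = 2 * q + 3 + t + s := ⟨ℓ - (2 * q + 3 + t), by omega⟩
    have hc : ((Tc (2 * q + 3 + t + s) (2 * q + 2 + t + 1) (q + 1) : ℕ) : ℝ)
        = ↑(Tc (2 * q + 3 + t + s) (2 * q + 2 + t) (q + 1)
              * (2 * (2 * q + 3 + t + s - (2 * q + 2 + t) + (q + 1))))
          + ↑(Tc (2 * q + 3 + t + s) (2 * q + 2 + t) q) * ↑(2 * q + 2 + t - 2 * q) := by
      simp only [Tc]
      rw [show 2 * q + 2 + t + 1 - (q + 1) = q + 2 + t from by omega,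
          show 2 * q + 2 + t + 1 - 2 * (q + 1) = t + 1 from by omega,
          show 2 * q + 2 + t - (q + 1) = q + 1 + t from by omega,
          show 2 * q + 2 + t - 2 * (q + 1) = t from by omega,
          show 2 * q + 3 + t + s - (2 * q + 2 + t) = s + 1 from by omega,
          show 2 * q + 2 + t - q = q + 2 + t from by omega,
          show 2 * q + 2 + t - 2 * q = t + 2 from by omega]
      push_cast
      rw [Nat.cast_choose ℝ (show q + 2 + t ≤ 2 * q + 3 + t + s from by omega),
          Nat.cast_choose ℝ (show q + 1 + t ≤ 2 * q + 3 + t + s from by omega),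
          Nat.cast_choose ℝ (show q + 1 ≤ q + 2 + t from by omega),
          Nat.cast_choose ℝ (show q + 1 ≤ q + 1 + t from by omega),
          Nat.cast_choose ℝ (show q ≤ q + 2 + t from by omega)]
      rw [show 2 * q + 3 + t + s - (q + 2 + t) = q + 1 + s from by omega,
          show 2 * q + 3 + t + s - (q + 1 + t) = q + 2 + s from by omega,
          show q + 2 + t - (q + 1) = t + 1 from by omega,
          show q + 1 + t - (q + 1) = t from by omega,
          show q + 2 + t - q = t + 2 from by omega]
      rw [show (2 * q + 2 + t + 1).factorial = (2 * q + 2 + t + 1) * (2 * q + 2 + t).factorial from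
            Nat.factorial_succ (2 * q + 2 + t),
          show (q + 2 + t).factorial = (q + 2 + t) * (q + 1 + t).factorial from by
            rw [show q + 2 + t = (q + 1 + t) + 1 from by omega, Nat.factorial_succ],
          show (q + 1).factorial = (q + 1) * q.factorial from Nat.factorial_succ q,
          show (t + 1).factorial = (t + 1) * t.factorial from Nat.factorial_succ t,
          show (t + 2).factorial = (t + 2) * ((t + 1) * t.factorial) from by
            rw [show t + 2 = (t + 1) + 1 from rfl, Nat.factorial_succ, Nat.factorial_succ],
          show (q + 2 + s).factorial = (q + 2 + s) * (q + 1 + s).factorial from by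
            rw [show q + 2 + s = (q + 1 + s) + 1 from by omega, Nat.factorial_succ]]
      have n1 : ((2 * q + 2 + t).factorial : ℝ) ≠ 0 := Nat.cast_ne_zero.mpr (Nat.factorial_ne_zero _)
      have n2 : ((q + 1 + t).factorial : ℝ) ≠ 0 := Nat.cast_ne_zero.mpr (Nat.factorial_ne_zero _)
      have n3 : (q.factorial : ℝ) ≠ 0 := Nat.cast_ne_zero.mpr (Nat.factorial_ne_zero _)
      have n4 : (t.factorial : ℝ) ≠ 0 := Nat.cast_ne_zero.mpr (Nat.factorial_ne_zero _)
      have n5 : ((q + 1 + s).factorial : ℝ) ≠ 0 := Nat.cast_ne_zero.mpr (Nat.factorial_ne_zero _)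
      have n6 : (((2 * q + 3 + t + s).factorial : ℕ) : ℝ) ≠ 0 :=
        Nat.cast_ne_zero.mpr (Nat.factorial_ne_zero _)
      field_simp
      push_cast
      ring
    rw [Tp, Ap, Bp]
    rw [show 2 * q + 3 + t + s - (2 * q + 2 + t + 1) + (q + 1) = q + 1 + s from by omega,
        show 2 * q + 3 + t + s - (2 * q + 2 + t) + q = q + 1 + s from by omega,
        show 2 * q + 2 + t + 1 - 2 * (q + 1) = t + 1 from by omega,
        show 2 * q + 2 + t - 2 * (q + 1) + 1 = t + 1 from by omega,
        show 2 * q + 2 + t - 2 * q - 1 = t + 1 from by omega]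
    have hC : (C ((Tc (2 * q + 3 + t + s) (2 * q + 2 + t + 1) (q + 1) : ℕ) : ℝ) : ℝ[X])
        = C ((Tc (2 * q + 3 + t + s) (2 * q + 2 + t) (q + 1)
              * (2 * (2 * q + 3 + t + s - (2 * q + 2 + t) + (q + 1))) : ℕ) : ℝ)
          + C ((Tc (2 * q + 3 + t + s) (2 * q + 2 + t) q : ℕ) : ℝ)
            * C ((2 * q + 2 + t - 2 * q : ℕ) : ℝ) := by
      rw [← C_mul, ← C_add]
      exact congrArg C (by push_cast at hc ⊢; linarith [hc])
    rw [hC]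
    ring

private lemma main_formula (ℓ : ℕ) :
    ∀ m, m ≤ ℓ → derivative^[m] (((X : ℝ[X]) ^ 2 - 1) ^ ℓ) = ∑ q ∈ range (m + 1), Tp ℓ m q := by
  intro m
  induction m with
  | zero => intro _; simp [Tp, Tc]
  | succ m ih =>
    intro h
    rw [Function.iterate_succ_apply', ih (by omega), derivative_sum]
    have hd : ∀ q ∈ range (m + 1), derivative (Tp ℓ m q) = Ap ℓ m q + Bp ℓ m q :=
      fun q _ => derivTp ℓ m q (by omega)
    rw [Finset.sum_congr rfl hd, Finset.sum_add_distrib]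
    have key : ∀ q ∈ range (m + 1), Tp ℓ (m + 1) (q + 1) = Ap ℓ m (q + 1) + Bp ℓ m q := by
      intro q hq'
      exact step_eq ℓ m q (by simpa using Nat.lt_succ_iff.mp (Finset.mem_range.mp hq')) h
    have hA0 : Ap ℓ m (m + 1) = 0 := by
      have hz : Tc ℓ m (m + 1) = 0 := by simp [Tc]
      simp [Ap, hz]
    rw [Finset.sum_range_succ' (Tp ℓ (m + 1)) (m + 1), Finset.sum_congr rfl key,
        Finset.sum_add_distrib, step0 ℓ m h,
        Finset.sum_range_succ (fun q => Ap ℓ m (q + 1)) m, hA0,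
        Finset.sum_range_succ' (Ap ℓ m) m]
    abel



/-- The Legendre polynomial of degree `ℓ`, via Rodrigues' formula
`P_ℓ = (1/(2^ℓ ℓ!)) (d/dx)^ℓ (x²-1)^ℓ`. -/
noncomputable def legendre (ℓ : ℕ) : Polynomial ℝ :=
  Polynomial.C (1 / ((2 : ℝ) ^ ℓ * Nat.factorial ℓ)) *
    Polynomial.derivative^[ℓ] ((Polynomial.X ^ 2 - 1) ^ ℓ)

/-- New development of the Legendre polynomial:
`P_ℓ(x) = ℓ! Σ_{q=0}^{⌊ℓ/2⌋} (x²-1)^q x^{ℓ-2q} / (4^q (ℓ-2q)! (q!)²)`. -/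
theorem legendre_explicit (ℓ : ℕ) (x : ℝ) :
    (legendre ℓ).eval x
      = (Nat.factorial ℓ : ℝ) *
          ∑ q ∈ Finset.Icc 0 (ℓ / 2),
            (x ^ 2 - 1) ^ q * x ^ (ℓ - 2 * q) /
              ((4 : ℝ) ^ q * (Nat.factorial (ℓ - 2 * q) : ℝ) * (Nat.factorial q : ℝ) ^ 2) := by
  rw [legendre, main_formula ℓ ℓ le_rfl, eval_mul, eval_C, eval_finset_sum]
  have hIcc : Finset.Icc 0 (ℓ / 2) = Finset.range (ℓ / 2 + 1) := by
    ext a; simp [Nat.lt_succ_iff]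
  rw [hIcc, Finset.mul_sum, Finset.mul_sum]
  rw [← Finset.sum_subset (Finset.range_subset_range.mpr (show ℓ / 2 + 1 ≤ ℓ + 1 by omega))
      (fun q _ hq => by
        have hz : Tc ℓ ℓ q = 0 := by
          simp only [Tc]
          have : ℓ - q < q := by
            simp only [Finset.mem_range] at hq
            omega
          simp [Nat.choose_eq_zero_of_lt this]
        simp [Tp, hz])]
  refine Finset.sum_congr rfl fun q hq => ?_
  have h2q : 2 * q ≤ ℓ := by
    simp only [Finset.mem_range] at hq
    omega
  obtain ⟨t, rfl⟩ : ∃ t, ℓ = 2 * q + t := ⟨ℓ - 2 * q, by omega⟩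
  simp only [Tp, Tc, eval_mul, eval_C, eval_pow, eval_sub, eval_one, eval_X]
  rw [show 2 * q + t - q = q + t from by omega,
      show 2 * q + t - 2 * q = t from by omega,
      show 2 * q + t - (2 * q + t) + q = q from by omega]
  rw [show (2 * q + t).choose (q + t) = (2 * q + t).choose q from by
        rw [← Nat.choose_symm (by omega : q ≤ 2 * q + t),
            show 2 * q + t - q = q + t from by omega]]
  push_cast
  rw [Nat.cast_choose ℝ (show q ≤ 2 * q + t from by omega),
      Nat.cast_choose ℝ (show q ≤ q + t from by omega)]
  rw [show 2 * q + t - q = q + t from by omega, show q + t - q = t from by omega]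
  have n1 : ((2 * q + t).factorial : ℝ) ≠ 0 := Nat.cast_ne_zero.mpr (Nat.factorial_ne_zero _)
  have n2 : ((q + t).factorial : ℝ) ≠ 0 := Nat.cast_ne_zero.mpr (Nat.factorial_ne_zero _)
  have n3 : (q.factorial : ℝ) ≠ 0 := Nat.cast_ne_zero.mpr (Nat.factorial_ne_zero _)
  have n4 : (t.factorial : ℝ) ≠ 0 := Nat.cast_ne_zero.mpr (Nat.factorial_ne_zero _)
  have h4 : (2 : ℝ) ^ (2 * q + t) = 4 ^ q * 2 ^ t := by
    rw [pow_add, pow_mul]; norm_num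
  rw [h4]
  have n5 : (4 : ℝ) ^ q ≠ 0 := by positivity
  have n6 : (2 : ℝ) ^ t ≠ 0 := by positivity
  field_simp
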